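/- Let U = Π σ T Π be a unitary operator on a finite-dimensional Hilbert space H_N (the range of an orthogonal projection Π), and suppose Egorov's one-step identity holds: U (Π M_F Π) U* = Π M_{F∘χ} Π + R with (1/d_N)||R||_HS^2 <= (K/N) ||F||_{C^2}^2 e^{2δ_0}, where the same bound holds with F replaced by F∘χ^ℓ and ||F∘χ^ℓ||_{C^2} <= c ||F||_{C^2} e^{|ℓ|δ_0}. Then for every T >= 1, U^T (Π M_F Π)(U*)^T = Π M_{F∘χ^T} Π + R^(T) with (1/d_N)||R^(T)||_HS^2 <= K' (T^2/N) ||F||_{C^2}^2 e^{2δ_0 T}. -/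

import Mathlib

open Matrix

/-- Hilbert–Schmidt norm squared. -/
noncomputable def hsNormSq {d : ℕ} (A : Matrix (Fin d) (Fin d) ℂ) : ℝ :=
  (Matrix.trace (Aᴴ * A)).re

attribute [local instance] Matrix.frobeniusNormedAddCommGroup

lemma hsNormSq_eq_sum {d : ℕ} (A : Matrix (Fin d) (Fin d) ℂ) :
    hsNormSq A = ∑ j, ∑ i, Complex.normSq (A i j) := by
  simp only [hsNormSq, Matrix.trace, Matrix.diag, Matrix.mul_apply, Matrix.conjTranspose_apply]
  rw [Complex.re_sum]
  congr 1; ext j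
  rw [Complex.re_sum]
  congr 1; ext i
  rw [RCLike.star_def, mul_comm, Complex.mul_conj', ← Complex.ofReal_pow, Complex.ofReal_re,
    Complex.sq_norm]

lemma hsNormSq_eq_norm {d : ℕ} (A : Matrix (Fin d) (Fin d) ℂ) :
    hsNormSq A = ‖A‖ ^ 2 := by
  rw [hsNormSq_eq_sum, Matrix.frobenius_norm_def, ← Real.rpow_natCast _ 2,
    ← Real.rpow_mul (by positivity)]
  norm_num
  rw [Finset.sum_comm]
  congr 1; ext i; congr 1; ext j
  rw [← Real.rpow_natCast _ 2]
  norm_num [Complex.sq_norm]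

lemma hsNormSq_conj {d : ℕ} (W : Matrix.unitaryGroup (Fin d) ℂ)
    (A : Matrix (Fin d) (Fin d) ℂ) :
    hsNormSq ((W : Matrix (Fin d) (Fin d) ℂ) * A * (W : Matrix (Fin d) (Fin d) ℂ)ᴴ)
      = hsNormSq A := by
  have h1 : (W : Matrix (Fin d) (Fin d) ℂ)ᴴ * (W : Matrix (Fin d) (Fin d) ℂ) = 1 :=
    Matrix.UnitaryGroup.star_mul_self W
  have h2 : (W : Matrix (Fin d) (Fin d) ℂ)ᴴ * (W : Matrix (Fin d) (Fin d) ℂ) = 1 := h1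
  unfold hsNormSq
  congr 1
  have hmul : ((W : Matrix (Fin d) (Fin d) ℂ) * A * (W : Matrix (Fin d) (Fin d) ℂ)ᴴ)ᴴ
      * ((W : Matrix (Fin d) (Fin d) ℂ) * A * (W : Matrix (Fin d) (Fin d) ℂ)ᴴ)
      = (W : Matrix (Fin d) (Fin d) ℂ) * (Aᴴ * A) * (W : Matrix (Fin d) (Fin d) ℂ)ᴴ := by
    rw [Matrix.conjTranspose_mul, Matrix.conjTranspose_mul, Matrix.conjTranspose_conjTranspose]
    simp only [Matrix.mul_assoc]
    rw [show (W : Matrix (Fin d) (Fin d) ℂ)ᴴ * ((W : Matrix (Fin d) (Fin d) ℂ)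
        * (A * (W : Matrix (Fin d) (Fin d) ℂ)ᴴ)) = A * (W : Matrix (Fin d) (Fin d) ℂ)ᴴ from by
      rw [← Matrix.mul_assoc, h1, Matrix.one_mul]]
  rw [hmul, Matrix.trace_mul_cycle, ← Matrix.mul_assoc, h1, Matrix.one_mul]

/-- Iterated Egorov theorem: if the one-step Egorov identity
`U (Π M_{F∘χ^ℓ} Π) U* = Π M_{F∘χ^{ℓ+1}} Π + R_ℓ` holds with
`(1/d_N)‖R_ℓ‖²_HS ≤ (K/N) ‖F∘χ^ℓ‖²_{C²} e^{2δ₀}` and `‖F∘χ^ℓ‖_{C²} ≤ c‖F‖_{C²} e^{|ℓ|δ₀}`,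
then for every `T ≥ 1`,
`U^T (Π M_F Π)(U*)^T = Π M_{F∘χ^T} Π + R^(T)` with
`(1/d_N)‖R^(T)‖²_HS ≤ K' (T²/N)‖F‖²_{C²} e^{2δ₀T}`. Here `B ℓ` stands for
`Π M_{F∘χ^ℓ} Π`. -/
theorem stmt_17 (d N : ℕ) (hd : 1 ≤ d) (hN : 1 ≤ N)
    (U : Matrix.unitaryGroup (Fin d) ℂ)
    (B : ℕ → Matrix (Fin d) (Fin d) ℂ)
    (K c δ₀ nF : ℝ) (hK : 0 < K) (hc : 0 < c) (hδ₀ : 0 < δ₀) (hnF : 0 ≤ nF)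
    (hstep : ∀ ℓ : ℕ,
      hsNormSq ((U : Matrix (Fin d) (Fin d) ℂ) * B ℓ * (U : Matrix (Fin d) (Fin d) ℂ)ᴴ
          - B (ℓ + 1)) / d
        ≤ (K / N) * (c * nF * Real.exp (ℓ * δ₀)) ^ 2 * Real.exp (2 * δ₀)) :
    ∃ K' : ℝ, 0 < K' ∧ ∀ T : ℕ, 1 ≤ T →
      hsNormSq ((U : Matrix (Fin d) (Fin d) ℂ) ^ T * B 0
          * ((U : Matrix (Fin d) (Fin d) ℂ)ᴴ) ^ T - B T) / d
        ≤ K' * ((T : ℝ) ^ 2 / N) * nF ^ 2 * Real.exp (2 * δ₀ * T) := by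
  set V : Matrix (Fin d) (Fin d) ℂ := (U : Matrix (Fin d) (Fin d) ℂ) with hV
  refine ⟨K * c ^ 2, by positivity, fun T hT => ?_⟩
  -- the telescoping identity
  have hdecomp : V ^ T * B 0 * (Vᴴ) ^ T - B T
      = ∑ j ∈ Finset.range T,
          V ^ (T - 1 - j) * (V * B j * Vᴴ - B (j + 1)) * (Vᴴ) ^ (T - 1 - j) := by
    have key : ∀ j ∈ Finset.range T,
        V ^ (T - 1 - j) * (V * B j * Vᴴ - B (j + 1)) * (Vᴴ) ^ (T - 1 - j)
        = (V ^ (T - j) * B j * (Vᴴ) ^ (T - j))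
          - (V ^ (T - (j + 1)) * B (j + 1) * (Vᴴ) ^ (T - (j + 1))) := by
      intro j hj
      have hjT : j < T := Finset.mem_range.mp hj
      have h1 : T - j = (T - 1 - j) + 1 := by omega
      have h2 : T - (j + 1) = T - 1 - j := by omega
      rw [h1, h2, pow_succ V, pow_succ' Vᴴ]
      noncomm_ring
    rw [Finset.sum_congr rfl key, Finset.sum_range_sub']
    simp
  rw [hdecomp]
  -- norm bound
  have hnorm : ∀ j, hsNormSq (V ^ (T - 1 - j) * (V * B j * Vᴴ - B (j + 1)) * (Vᴴ) ^ (T - 1 - j))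
      = hsNormSq (V * B j * Vᴴ - B (j + 1)) := by
    intro j
    have : (Vᴴ) ^ (T - 1 - j) = ((U ^ (T - 1 - j) : Matrix.unitaryGroup (Fin d) ℂ)
        : Matrix (Fin d) (Fin d) ℂ)ᴴ := by
      rw [SubmonoidClass.coe_pow, Matrix.conjTranspose_pow]
    rw [this, show V ^ (T-1-j) = ((U ^ (T-1-j) : Matrix.unitaryGroup (Fin d) ℂ)
        : Matrix (Fin d) (Fin d) ℂ) by rw [SubmonoidClass.coe_pow]]
    exact hsNormSq_conj (U ^ (T - 1 - j)) _
  -- each summand bound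
  have hbound : ∀ j ∈ Finset.range T,
      hsNormSq (V * B j * Vᴴ - B (j + 1))
        ≤ d * ((K / N) * c ^ 2 * nF ^ 2 * Real.exp (2 * δ₀ * T)) := by
    intro j hj
    have hjT : j < T := Finset.mem_range.mp hj
    have h1 := hstep j
    have hd' : (0:ℝ) < d := by exact_mod_cast hd
    rw [div_le_iff₀ hd'] at h1
    refine h1.trans ?_
    have hexp : Real.exp ((j:ℝ) * δ₀) ^ 2 * Real.exp (2 * δ₀) = Real.exp (2 * δ₀ * (j + 1)) := by
      rw [← Real.exp_nat_mul, ← Real.exp_add]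
      congr 1; push_cast; ring
    have heq : (K / N) * (c * nF * Real.exp ((j:ℝ) * δ₀)) ^ 2 * Real.exp (2 * δ₀) * d
        = d * ((K / N) * c ^ 2 * nF ^ 2 * (Real.exp ((j:ℝ) * δ₀) ^ 2 * Real.exp (2 * δ₀))) := by
      ring
    rw [heq, hexp]
    apply mul_le_mul_of_nonneg_left _ (le_of_lt hd')
    apply mul_le_mul_of_nonneg_left _ (by positivity)
    apply Real.exp_le_exp.mpr
    have : (j:ℝ) + 1 ≤ T := by exact_mod_cast hjT
    nlinarith [hδ₀.le]
  -- combine: ‖∑‖² ≤ T * ∑ ‖·‖²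
  set f : ℕ → Matrix (Fin d) (Fin d) ℂ :=
    fun j => V ^ (T - 1 - j) * (V * B j * Vᴴ - B (j + 1)) * (Vᴴ) ^ (T - 1 - j) with hf
  have hsum : hsNormSq (∑ j ∈ Finset.range T, f j)
      ≤ T * ∑ j ∈ Finset.range T, hsNormSq (f j) := by
    rw [hsNormSq_eq_norm]
    calc ‖∑ j ∈ Finset.range T, f j‖ ^ 2
        ≤ (∑ j ∈ Finset.range T, ‖f j‖) ^ 2 := by
          apply pow_le_pow_left₀ (norm_nonneg _) (norm_sum_le _ _)
      _ ≤ (Finset.range T).card * ∑ j ∈ Finset.range T, ‖f j‖ ^ 2 :=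
          sq_sum_le_card_mul_sum_sq
      _ = T * ∑ j ∈ Finset.range T, hsNormSq (f j) := by
          rw [Finset.card_range]
          congr 1
          exact Finset.sum_congr rfl fun j _ => (hsNormSq_eq_norm (f j)).symm
  have hd' : (0:ℝ) < d := by exact_mod_cast hd
  rw [div_le_iff₀ hd']
  calc hsNormSq (∑ j ∈ Finset.range T, f j)
      ≤ T * ∑ j ∈ Finset.range T, hsNormSq (f j) := hsum
    _ ≤ T * ∑ j ∈ Finset.range T,
          (d * ((K / N) * c ^ 2 * nF ^ 2 * Real.exp (2 * δ₀ * T))) := by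
        apply mul_le_mul_of_nonneg_left _ (by positivity)
        apply Finset.sum_le_sum
        intro j hj
        rw [hf]
        rw [hnorm j]
        exact hbound j hj
    _ = T * (T * (d * ((K / N) * c ^ 2 * nF ^ 2 * Real.exp (2 * δ₀ * T)))) := by
        rw [Finset.sum_const, Finset.card_range, nsmul_eq_mul]
    _ = K * c ^ 2 * ((T : ℝ) ^ 2 / N) * nF ^ 2 * Real.exp (2 * δ₀ * T) * d := by
        ring
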